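/- Theorem (two solutions): Assume min_k p(k) > 0; assume one of the anti-coercivity hypotheses holds (e.g., there exist M ≥ 0, α > 0, q > 2 with F(k,u) ≥ α|u|^q for |u| > M and all k); and assume max_{k∈Z[1,N]} lim_{u→0} f(k,u)/u ≤ c < λ·min_k p(k). Then the boundary value problem Δⁿ(p(k-n)Δⁿx(k-n)) + (-1)^{n+1} f(k,x(k)) = 0, x(i) = 0 on Z[1-n,0] ∪ Z[N+1,N+n], has at least two distinct solutions. -/

import Mathlib

open Finset

/-- forward difference operator -/
def dd (x : ℤ → ℝ) : ℤ → ℝ := fun i => x (i + 1) - x i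

/-- extension of `v : Fin N → ℝ` to a function on `ℤ` supported on `Z[1,N]`
(thus vanishing on `Z[1-n,0] ∪ Z[N+1,N+n]`); this realizes the space `E`. -/
noncomputable def extendE (N : ℕ) (v : Fin N → ℝ) : ℤ → ℝ := fun i =>
  if h : 0 ≤ i - 1 ∧ (i - 1).toNat < N then v ⟨(i - 1).toNat, h.2⟩ else 0

/-- the norm of the space `E`: `‖x‖ = (∑_{k=1}^N x(k)²)^{1/2}` -/
noncomputable def normE (N : ℕ) (v : Fin N → ℝ) : ℝ :=
  Real.sqrt (∑ k ∈ Finset.Icc (1 : ℤ) (N : ℤ), (extendE N v k) ^ 2)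

/-- `F(k,s) = ∫₀ˢ f(k,t) dt` -/
noncomputable def Ffun (f : ℤ → ℝ → ℝ) (k : ℤ) (s : ℝ) : ℝ := ∫ t in (0 : ℝ)..s, f k t

/-- the action functional `J` -/
noncomputable def Jfun (n N : ℕ) (p : ℤ → ℝ) (F : ℤ → ℝ → ℝ) (v : Fin N → ℝ) : ℝ :=
  ∑ k ∈ Finset.Icc (1 - (n : ℤ)) (N : ℤ),
    ((1 / 2 : ℝ) * p k * (dd^[n] (extendE N v) k) ^ 2 - F k (extendE N v k))

/-- `v` solves the discrete BVP
`Δⁿ(p(k-n)Δⁿx(k-n)) + (-1)^{n+1} f(k,x(k)) = 0`, `k ∈ Z[1,N]`,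
with the Dirichlet boundary conditions built into `extendE`. -/
def Solves (n N : ℕ) (p : ℤ → ℝ) (f : ℤ → ℝ → ℝ) (v : Fin N → ℝ) : Prop :=
  ∀ k ∈ Finset.Icc (1 : ℤ) (N : ℤ),
    dd^[n] (fun j => p j * dd^[n] (extendE N v) j) (k - n)
      + (-1 : ℝ) ^ (n + 1) * f k (extendE N v k) = 0

/-- coercivity: `J(x) → +∞` as `‖x‖ → ∞` -/
def CoerciveE (N : ℕ) (J : (Fin N → ℝ) → ℝ) : Prop :=
  ∀ C : ℝ, ∃ R : ℝ, ∀ v : Fin N → ℝ, R ≤ normE N v → C ≤ J v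

/-- anti-coercivity: `J(x) → −∞` as `‖x‖ → ∞` -/
def AntiCoerciveE (N : ℕ) (J : (Fin N → ℝ) → ℝ) : Prop :=
  ∀ C : ℝ, ∃ R : ℝ, ∀ v : Fin N → ℝ, R ≤ normE N v → J v ≤ C

/-! ### Auxiliary lemmas -/

lemma ddn_eq (n : ℕ) (x : ℤ → ℝ) (k : ℤ) :
    dd^[n] x k = ∑ i ∈ Finset.range (n+1), (-1:ℝ)^(n+i) * (n.choose i) * x (k+i) := by
  induction n generalizing x k with
  | zero => simp
  | succ n ih =>
    rw [Function.iterate_succ_apply]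
    rw [ih (dd x) k]
    have hdd : ∀ m : ℤ, dd x m = x (m+1) - x m := fun m => rfl
    simp only [hdd]
    have h1 : ∑ i ∈ Finset.range (n+1), (-1:ℝ)^(n+i) * (n.choose i) * (x (k+i+1) - x (k+i))
        = (∑ i ∈ Finset.range (n+1), (-1:ℝ)^(n+i) * (n.choose i) * x (k+i+1))
          - ∑ i ∈ Finset.range (n+1), (-1:ℝ)^(n+i) * (n.choose i) * x (k+i) := by
      rw [← Finset.sum_sub_distrib]; apply Finset.sum_congr rfl; intros; ring
    rw [h1]
    rw [Finset.sum_range_succ' (fun i => (-1:ℝ)^(n+1+i) * ((n+1).choose i) * x (k+i)) (n+1)]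
    have h2 : ∀ i ∈ Finset.range (n+1),
        (-1:ℝ)^(n+1+(i+1)) * (((n+1).choose (i+1) : ℕ) : ℝ) * x (k+((i:ℤ)+1))
        = (-1:ℝ)^(n+i) * (n.choose i) * x (k+i+1) + (-1:ℝ)^(n+i) * (n.choose (i+1)) * x (k+i+1) := by
      intro i hi
      rw [Nat.choose_succ_succ]
      push_cast
      have : (-1:ℝ)^(n+1+(i+1)) = (-1:ℝ)^(n+i) := by
        rw [show n+1+(i+1) = (n+i)+2 by ring, pow_add]; norm_num
      rw [this]
      have : (k + (↑i + 1) : ℤ) = k + ↑i + 1 := by ring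
      rw [this]; ring
    push_cast
    rw [Finset.sum_congr rfl h2, Finset.sum_add_distrib]
    have h3 : (∑ i ∈ Finset.range (n+1), (-1:ℝ)^(n+i) * (n.choose (i+1)) * x (k+i+1))
        + (-1:ℝ)^(n+1+0) * (((n+1).choose 0 : ℕ):ℝ) * x (k+(0:ℕ))
        = - ∑ i ∈ Finset.range (n+1), (-1:ℝ)^(n+i) * (n.choose i) * x (k+i) := by
      rw [Finset.sum_range_succ' (fun i => (-1:ℝ)^(n+i) * (n.choose i) * x (k+i)) n]
      rw [Finset.sum_range_succ (fun i => (-1:ℝ)^(n+i) * (n.choose (i+1)) * x (k+i+1)) n]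
      simp only [Nat.choose_succ_self, Nat.cast_zero, mul_zero, zero_mul, add_zero,
        Nat.choose_zero_right, Nat.cast_one, Nat.cast_ofNat]
      rw [neg_add]
      congr 1
      · rw [← Finset.sum_neg_distrib]
        apply Finset.sum_congr rfl
        intro i hi
        have e1 : (-1:ℝ)^(n+(i+1)) = -(-1:ℝ)^(n+i) := by
          rw [show n+(i+1) = (n+i)+1 by ring, pow_succ]; ring
        rw [e1]
        have e2 : (k + ((i:ℤ)+1) : ℤ) = k + ↑i + 1 := by push_cast; ring
        push_cast
        rw [e2]; ring
      · have e1 : (-1:ℝ)^(n+1+0) = -(-1:ℝ)^(n+(0:ℕ)) := by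
          rw [show n+1+0 = (n+0)+1 by ring, pow_succ]; ring
        rw [e1]
        push_cast
        ring_nf
    push_cast at h3 ⊢
    linarith [h3]

lemma extendE_apply (N : ℕ) (v : Fin N → ℝ) (j : Fin N) :
    extendE N v ((j:ℤ)+1) = v j := by
  unfold extendE
  have h1 : ((j:ℤ)+1) - 1 = (j:ℤ) := by ring
  rw [dif_pos]
  · congr 1
    · ext; simp [h1]
  · constructor <;> simp [h1, j.isLt]

lemma extendE_eq_zero (N : ℕ) (v : Fin N → ℝ) (k : ℤ)
    (h : k ∉ Finset.Icc (1:ℤ) (N:ℤ)) : extendE N v k = 0 := by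
  simp only [Finset.mem_Icc, not_and, not_le] at h
  unfold extendE
  rw [dif_neg]
  rintro ⟨h1, h2⟩
  omega

lemma extendE_zero (N : ℕ) (k : ℤ) : extendE N (0 : Fin N → ℝ) k = 0 := by
  unfold extendE; split_ifs <;> simp

lemma extendE_single (N : ℕ) (j : Fin N) (t : ℝ) (k : ℤ) :
    extendE N (Pi.single j t) k = if k = (j:ℤ)+1 then t else 0 := by
  by_cases hk : k = (j:ℤ)+1
  · subst hk
    rw [extendE_apply, Pi.single_eq_same, if_pos rfl]
  · rw [if_neg hk]
    unfold extendE
    split_ifs with h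
    · rw [Pi.single_apply, if_neg]
      intro he
      apply hk
      have : ((⟨(k-1).toNat, h.2⟩ : Fin N) : ℤ) = (j:ℤ) := by rw [he]
      simp at this
      omega
    · rfl

lemma extendE_update (N : ℕ) (w : Fin N → ℝ) (j : Fin N) (t : ℝ) (k : ℤ) :
    extendE N (Function.update w j t) k = if k = (j:ℤ)+1 then t else extendE N w k := by
  by_cases hk : k = (j:ℤ)+1
  · subst hk; rw [extendE_apply, Function.update_self, if_pos rfl]
  · rw [if_neg hk]
    unfold extendE
    split_ifs with h
    · rw [Function.update_apply, if_neg]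
      intro he
      apply hk
      have : ((⟨(k-1).toNat, h.2⟩ : Fin N) : ℤ) = (j:ℤ) := by rw [he]
      simp at this
      omega
    · rfl

lemma extendE_update_eq (N : ℕ) (w : Fin N → ℝ) (j : Fin N) (t : ℝ) :
    extendE N (Function.update w j t) = fun k =>
      extendE N w k + (t - w j) * extendE N (Pi.single j (1:ℝ)) k := by
  funext k
  rw [extendE_update, extendE_single]
  split_ifs with h
  · subst h
    rw [extendE_apply]
    ring
  · ring

lemma hasDerivAt_Ffun {f : ℤ → ℝ → ℝ} (hf : ∀ k, Continuous (f k)) (k : ℤ) (t : ℝ) :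
    HasDerivAt (Ffun f k) (f k t) t := by
  apply intervalIntegral.integral_hasDerivAt_right
  · exact (hf k).intervalIntegrable 0 t
  · exact (hf k).stronglyMeasurableAtFilter _ _
  · exact (hf k).continuousAt

lemma continuous_Ffun {f : ℤ → ℝ → ℝ} (hf : ∀ k, Continuous (f k)) (k : ℤ) :
    Continuous (Ffun f k) :=
  continuous_iff_continuousAt.2 fun t => (hasDerivAt_Ffun hf k t).continuousAt

lemma Ffun_zero (f : ℤ → ℝ → ℝ) (k : ℤ) : Ffun f k 0 = 0 := by
  simp [Ffun]

lemma sumBpart (n N : ℕ) (g : ℤ → ℝ) (j : Fin N) :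
    ∑ k ∈ Finset.Icc (1-(n:ℤ)) (N:ℤ), g k * dd^[n] (extendE N (Pi.single j (1:ℝ))) k
      = (-1:ℝ)^n * dd^[n] g ((j:ℤ)+1-n) := by
  have hjlt := j.isLt
  have hj1 : (1:ℤ) ≤ (j:ℤ)+1 := by omega
  have hjN : (j:ℤ)+1 ≤ (N:ℤ) := by omega
  have hL : ∑ k ∈ Finset.Icc (1-(n:ℤ)) (N:ℤ), g k * dd^[n] (extendE N (Pi.single j (1:ℝ))) k
      = ∑ i ∈ Finset.range (n+1), (-1:ℝ)^(n+i) * (n.choose i) * g ((j:ℤ)+1-i) := by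
    have e1 : ∀ k : ℤ, g k * dd^[n] (extendE N (Pi.single j (1:ℝ))) k
        = ∑ i ∈ Finset.range (n+1), (-1:ℝ)^(n+i) * (n.choose i) * (if k = (j:ℤ)+1-i then g k else 0) := by
      intro k
      rw [ddn_eq, Finset.mul_sum]
      apply Finset.sum_congr rfl
      intro i _
      rw [extendE_single]
      by_cases h : k = (j:ℤ)+1-(i:ℤ)
      · rw [if_pos (by omega), if_pos h]; ring
      · rw [if_neg (by omega), if_neg h]; ring
    simp only [e1]
    rw [Finset.sum_comm]
    apply Finset.sum_congr rfl
    intro i hi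
    rw [← Finset.mul_sum, Finset.sum_ite_eq']
    rw [if_pos]
    simp only [Finset.mem_range] at hi
    rw [Finset.mem_Icc]
    omega
  rw [hL, ddn_eq]
  rw [← Finset.sum_range_reflect (fun i => (-1:ℝ)^(n+i) * (n.choose i) * g ((j:ℤ)+1-i)) (n+1)]
  rw [Finset.mul_sum]
  apply Finset.sum_congr rfl
  intro i hi
  simp only [Finset.mem_range] at hi
  have hin : i ≤ n := by omega
  have h1 : n + 1 - 1 - i = n - i := by omega
  rw [h1]
  have h3 : ((j:ℤ)+1-((n-i:ℕ):ℤ)) = (j:ℤ)+1-(n:ℤ)+(i:ℤ) := by omega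
  rw [h3]
  have h4 : (n.choose (n-i) : ℝ) = (n.choose i : ℝ) := by rw [Nat.choose_symm hin]
  rw [h4]
  have h5 : (-1:ℝ)^(n+(n-i)) = (-1:ℝ)^n * (-1:ℝ)^(n+i) := by
    have e1 : (-1:ℝ)^(n+(n-i)) * (-1:ℝ)^(2*i) = (-1:ℝ)^(n+(n+i)) := by
      rw [← pow_add]; congr 1; omega
    have e2 : (-1:ℝ)^(2*i) = (1:ℝ) := by rw [pow_mul]; norm_num
    rw [e2, mul_one] at e1
    rw [e1, pow_add]
  rw [h5]
  ring

lemma ddn_add_smul (n : ℕ) (x y : ℤ → ℝ) (a : ℝ) (k : ℤ) :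
    dd^[n] (fun i => x i + a * y i) k = dd^[n] x k + a * dd^[n] y k := by
  simp only [ddn_eq, Finset.mul_sum, ← Finset.sum_add_distrib]
  apply Finset.sum_congr rfl
  intros; ring

lemma hasDerivAt_Jupdate (n N : ℕ) (p : ℤ → ℝ) (f : ℤ → ℝ → ℝ)
    (hf : ∀ k, Continuous (f k)) (w : Fin N → ℝ) (j : Fin N) :
    HasDerivAt (fun t => Jfun n N p (Ffun f) (Function.update w j t))
      ((∑ k ∈ Finset.Icc (1-(n:ℤ)) (N:ℤ),
          p k * dd^[n] (extendE N w) k * dd^[n] (extendE N (Pi.single j (1:ℝ))) k)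
        - f ((j:ℤ)+1) (extendE N w ((j:ℤ)+1))) (w j) := by
  have hjlt := j.isLt
  have hjmem : ((j:ℤ)+1) ∈ Finset.Icc (1-(n:ℤ)) (N:ℤ) := by
    rw [Finset.mem_Icc]; omega
  set A : ℤ → ℝ := fun k => dd^[n] (extendE N w) k with hA
  set B : ℤ → ℝ := fun k => dd^[n] (extendE N (Pi.single j (1:ℝ))) k with hB
  have hfun : (fun t => Jfun n N p (Ffun f) (Function.update w j t))
      = fun t => (∑ k ∈ Finset.Icc (1-(n:ℤ)) (N:ℤ),
          (1/2:ℝ) * p k * (A k + (t - w j) * B k)^2)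
        - ((∑ k ∈ (Finset.Icc (1-(n:ℤ)) (N:ℤ)).erase ((j:ℤ)+1),
            Ffun f k (extendE N w k)) + Ffun f ((j:ℤ)+1) t) := by
    funext t
    unfold Jfun
    rw [Finset.sum_sub_distrib]
    congr 1
    · apply Finset.sum_congr rfl
      intro k _
      rw [extendE_update_eq, ddn_add_smul]
    · rw [← Finset.sum_erase_add _ _ hjmem]
      congr 1
      · apply Finset.sum_congr rfl
        intro k hk
        rw [extendE_update]
        rw [if_neg (Finset.ne_of_mem_erase hk)]
      · rw [extendE_update, if_pos rfl]
  rw [hfun]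
  have h1 : HasDerivAt (fun t => ∑ k ∈ Finset.Icc (1-(n:ℤ)) (N:ℤ),
      (1/2:ℝ) * p k * (A k + (t - w j) * B k)^2)
      (∑ k ∈ Finset.Icc (1-(n:ℤ)) (N:ℤ), p k * A k * B k) (w j) := by
    apply HasDerivAt.fun_sum
    intro k _
    have hinner : HasDerivAt (fun t : ℝ => A k + (t - w j) * B k) (B k) (w j) := by
      simpa using (((hasDerivAt_id (w j)).sub_const (w j)).mul_const (B k)).const_add (A k)
    have := ((hinner.fun_pow 2).const_mul ((1/2:ℝ) * p k))
    convert this using 1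
    · rfl
    simp
    ring
  have h2 : HasDerivAt (fun t => (∑ k ∈ (Finset.Icc (1-(n:ℤ)) (N:ℤ)).erase ((j:ℤ)+1),
        Ffun f k (extendE N w k)) + Ffun f ((j:ℤ)+1) t)
      (f ((j:ℤ)+1) (w j)) (w j) := by
    exact (hasDerivAt_Ffun hf ((j:ℤ)+1) (w j)).const_add _
  have hx : extendE N w ((j:ℤ)+1) = w j := by
    have := extendE_update N w j (w j) ((j:ℤ)+1)
    rw [Function.update_eq_self, if_pos rfl] at this
    exact this
  rw [hx]
  exact h1.sub h2

lemma ddn_zero_fun (n : ℕ) (k : ℤ) : dd^[n] (fun _ : ℤ => (0:ℝ)) k = 0 := by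
  rw [ddn_eq]; simp

lemma solves_zero (n N : ℕ) (p : ℤ → ℝ) (f : ℤ → ℝ → ℝ) (hf0 : ∀ k, f k 0 = 0) :
    Solves n N p f 0 := by
  intro k _
  have h1 : (fun j => p j * dd^[n] (extendE N (0 : Fin N → ℝ)) j) = fun _ : ℤ => (0:ℝ) := by
    funext m
    have : extendE N (0 : Fin N → ℝ) = fun _ : ℤ => (0:ℝ) := funext (extendE_zero N)
    rw [this, ddn_zero_fun, mul_zero]
  rw [h1, ddn_zero_fun, extendE_zero, hf0]
  ring

lemma crit_solves (n N : ℕ) (hN : 2 ≤ N) (p : ℤ → ℝ) (f : ℤ → ℝ → ℝ)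
    (hf : ∀ k, Continuous (f k)) (w : Fin N → ℝ)
    (hmax : ∀ v : Fin N → ℝ, Jfun n N p (Ffun f) v ≤ Jfun n N p (Ffun f) w) :
    Solves n N p f w := by
  intro k hk
  rw [Finset.mem_Icc] at hk
  have hkN : (k - 1).toNat < N := by omega
  set j : Fin N := ⟨(k-1).toNat, hkN⟩ with hj
  have hkj : k = (j:ℤ)+1 := by simp [hj]; omega
  have hloc : IsLocalMax (fun t => Jfun n N p (Ffun f) (Function.update w j t)) (w j) := by
    have hupd : ∀ t, (fun t => Jfun n N p (Ffun f) (Function.update w j t)) t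
        ≤ (fun t => Jfun n N p (Ffun f) (Function.update w j t)) (w j) := by
      intro t
      simp only [Function.update_eq_self]
      exact hmax _
    exact Filter.Eventually.of_forall hupd
  have hder := hasDerivAt_Jupdate n N p f hf w j
  have hzero := hloc.hasDerivAt_eq_zero hder
  have hsum : ∑ k ∈ Finset.Icc (1-(n:ℤ)) (N:ℤ),
      p k * dd^[n] (extendE N w) k * dd^[n] (extendE N (Pi.single j (1:ℝ))) k
      = (-1:ℝ)^n * dd^[n] (fun i => p i * dd^[n] (extendE N w) i) ((j:ℤ)+1-n) := by
    rw [← sumBpart n N (fun i => p i * dd^[n] (extendE N w) i) j]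
  rw [hsum] at hzero
  have heq : (-1:ℝ)^n * dd^[n] (fun i => p i * dd^[n] (extendE N w) i) ((j:ℤ)+1-n)
      = f ((j:ℤ)+1) (extendE N w ((j:ℤ)+1)) := by linarith
  have hsq : (-1:ℝ)^n * (-1:ℝ)^n = 1 := by
    rw [← pow_add, show n+n = 2*n by ring, pow_mul]; norm_num
  rw [hkj]
  have : dd^[n] (fun i => p i * dd^[n] (extendE N w) i) ((j:ℤ)+1-n)
      = (-1:ℝ)^n * f ((j:ℤ)+1) (extendE N w ((j:ℤ)+1)) := by
    calc dd^[n] (fun i => p i * dd^[n] (extendE N w) i) ((j:ℤ)+1-n)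
        = ((-1:ℝ)^n * (-1:ℝ)^n) * dd^[n] (fun i => p i * dd^[n] (extendE N w) i) ((j:ℤ)+1-n) := by
          rw [hsq, one_mul]
      _ = (-1:ℝ)^n * f ((j:ℤ)+1) (extendE N w ((j:ℤ)+1)) := by rw [mul_assoc, heq]
  rw [this, pow_succ]
  ring

lemma continuous_extendE_coord (N : ℕ) (k : ℤ) :
    Continuous fun v : Fin N → ℝ => extendE N v k := by
  unfold extendE
  by_cases h : 0 ≤ k - 1 ∧ (k - 1).toNat < N
  · simp only [dif_pos h]
    exact continuous_apply _
  · simp only [dif_neg h]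
    exact continuous_const

lemma continuous_ddn_coord (n N : ℕ) (k : ℤ) :
    Continuous fun v : Fin N → ℝ => dd^[n] (extendE N v) k := by
  simp only [ddn_eq]
  apply continuous_finset_sum
  intro i _
  exact continuous_const.mul (continuous_extendE_coord N (k+i))

lemma continuous_J (n N : ℕ) (p : ℤ → ℝ) (f : ℤ → ℝ → ℝ) (hf : ∀ k, Continuous (f k)) :
    Continuous (Jfun n N p (Ffun f)) := by
  unfold Jfun
  apply continuous_finset_sum
  intro k _
  apply Continuous.sub
  · exact (continuous_const.mul ((continuous_ddn_coord n N k).pow 2))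
  · exact (continuous_Ffun hf k).comp (continuous_extendE_coord N k)

lemma sum_extendE_sq (N : ℕ) (hN : 0 < N) (v : Fin N → ℝ) :
    ∑ k ∈ Finset.Icc (1:ℤ) (N:ℤ), (extendE N v k)^2 = ∑ j : Fin N, (v j)^2 := by
  apply Finset.sum_nbij' (i := fun k => if h : 0 ≤ k - 1 ∧ (k-1).toNat < N then
      (⟨(k-1).toNat, h.2⟩ : Fin N) else ⟨0, hN⟩) (j := fun j => (j:ℤ)+1)
  · intro a _; exact Finset.mem_univ _
  · intro j _
    have := j.isLt
    rw [Finset.mem_Icc]; omega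
  · intro k hk
    rw [Finset.mem_Icc] at hk
    rw [dif_pos (by omega)]
    simp; omega
  · intro j _
    have := j.isLt
    rw [dif_pos (by omega)]
    ext
    simp
  · intro k hk
    rw [Finset.mem_Icc] at hk
    have h : 0 ≤ k - 1 ∧ (k-1).toNat < N := by omega
    rw [dif_pos h]
    have : ((⟨(k-1).toNat, h.2⟩ : Fin N) : ℤ) + 1 = k := by simp; omega
    conv_lhs => rw [← this]
    rw [extendE_apply]

/-- the square-sum of `extendE N v` over any finite set is at most the full square sum. -/
lemma sum_sq_le_S (N : ℕ) (v : Fin N → ℝ) (A : Finset ℤ) :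
    ∑ m ∈ A, (extendE N v m)^2 ≤ ∑ m ∈ Finset.Icc (1:ℤ) (N:ℤ), (extendE N v m)^2 := by
  have h1 : ∑ m ∈ A, (extendE N v m)^2 = ∑ m ∈ A ∩ Finset.Icc (1:ℤ) (N:ℤ), (extendE N v m)^2 := by
    apply (Finset.sum_subset (Finset.inter_subset_left) _).symm
    intro m hm hm'
    have : m ∉ Finset.Icc (1:ℤ) (N:ℤ) := fun hmem => hm' (Finset.mem_inter.2 ⟨hm, hmem⟩)
    rw [extendE_eq_zero N v m this]
    norm_num
  rw [h1]
  exact Finset.sum_le_sum_of_subset_of_nonneg (Finset.inter_subset_right)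
    (fun m _ _ => sq_nonneg _)

set_option maxHeartbeats 4000000 in
theorem stmt18 (n N : ℕ) (hn : 1 ≤ n) (hN : 2 ≤ N) (p : ℤ → ℝ)
    (f : ℤ → ℝ → ℝ) (hf : ∀ k, Continuous (f k)) (hf0 : ∀ k, f k 0 = 0)
    (lam : ℝ) (hlam : 0 < lam)
    (hpoin : ∀ v : Fin N → ℝ,
      lam * ∑ k ∈ Finset.Icc (1 : ℤ) (N : ℤ), (extendE N v k) ^ 2
        ≤ ∑ k ∈ Finset.Icc (1 - (n : ℤ)) (N : ℤ), (dd^[n] (extendE N v) k) ^ 2)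
    (pmin : ℝ) (hpmin : 0 < pmin)
    (hp : ∀ k ∈ Finset.Icc (1 - (n : ℤ)) (N : ℤ), pmin ≤ p k)
    -- anti-coercivity hypothesis: `F(k,u) ≥ α|u|^q` for `|u| > M`, `q > 2`
    (M α q : ℝ) (hM : 0 ≤ M) (hα : 0 < α) (hq : 2 < q)
    (hFge : ∀ k ∈ Finset.Icc (1 : ℤ) (N : ℤ), ∀ u : ℝ, M < |u| →
      α * |u| ^ q ≤ Ffun f k u)
    -- `max_k lim_{u→0} f(k,u)/u ≤ c < λ · min_k p(k)`
    (L : ℤ → ℝ) (c : ℝ) (hc : c < lam * pmin)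
    (hlim : ∀ k ∈ Finset.Icc (1 : ℤ) (N : ℤ),
      Filter.Tendsto (fun u : ℝ => f k u / u) (nhdsWithin 0 {(0 : ℝ)}ᶜ) (nhds (L k)))
    (hLc : ∀ k ∈ Finset.Icc (1 : ℤ) (N : ℤ), L k ≤ c) :
    ∃ v w : Fin N → ℝ, v ≠ w ∧ Solves n N p f v ∧ Solves n N p f w := by
  classical
  have hNpos : 0 < N := by omega
  have hNR : (0:ℝ) < (N:ℝ) := by exact_mod_cast hNpos
  -- J 0 = 0
  have hJ0 : Jfun n N p (Ffun f) 0 = 0 := by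
    unfold Jfun
    apply Finset.sum_eq_zero
    intro k _
    have hx : extendE N (0 : Fin N → ℝ) = fun _ : ℤ => (0:ℝ) := funext (extendE_zero N)
    rw [hx, ddn_zero_fun]
    simp [Ffun_zero]
  -- quadratic upper bound
  obtain ⟨P, hP⟩ : ∃ P : ℝ, P = ∑ k ∈ Finset.Icc (1-(n:ℤ)) (N:ℤ), |p k| := ⟨_, rfl⟩
  have hP0 : 0 ≤ P := by
    rw [hP]; exact Finset.sum_nonneg fun i _ => abs_nonneg _
  have hPk : ∀ k ∈ Finset.Icc (1-(n:ℤ)) (N:ℤ), p k ≤ P := by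
    intro k hk
    rw [hP]
    calc p k ≤ |p k| := le_abs_self _
      _ ≤ _ := Finset.single_le_sum (fun i _ => abs_nonneg (p i)) hk
  obtain ⟨Aq, hAq⟩ : ∃ Aq : ℝ, Aq = (1/2) * P * (((n:ℝ)+1) * 4^n) * ((n:ℝ)+1) := ⟨_, rfl⟩
  have hhalfP : (0:ℝ) ≤ (1/2) * P * (((n:ℝ)+1) * 4^n) :=
    mul_nonneg (mul_nonneg (by norm_num) hP0) (by positivity)
  have hAq0 : 0 ≤ Aq := by
    rw [hAq]; exact mul_nonneg hhalfP (by positivity)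
  have hquad : ∀ v : Fin N → ℝ,
      ∑ k ∈ Finset.Icc (1-(n:ℤ)) (N:ℤ), (1/2:ℝ) * p k * (dd^[n] (extendE N v) k)^2
        ≤ Aq * ∑ k ∈ Finset.Icc (1:ℤ) (N:ℤ), (extendE N v k)^2 := by
    intro v
    have hS0 : (0:ℝ) ≤ ∑ k ∈ Finset.Icc (1:ℤ) (N:ℤ), (extendE N v k)^2 :=
      Finset.sum_nonneg fun _ _ => sq_nonneg _
    have hDk : ∀ k : ℤ, (dd^[n] (extendE N v) k)^2
        ≤ (((n:ℝ)+1) * 4^n) * ∑ i ∈ Finset.range (n+1), (extendE N v (k+i))^2 := by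
      intro k
      rw [ddn_eq]
      calc (∑ i ∈ Finset.range (n+1), (-1:ℝ)^(n+i) * (n.choose i) * extendE N v (k+i))^2
          ≤ ((Finset.range (n+1)).card : ℝ) * ∑ i ∈ Finset.range (n+1),
              ((-1:ℝ)^(n+i) * (n.choose i) * extendE N v (k+i))^2 :=
            sq_sum_le_card_mul_sum_sq
        _ ≤ (((n:ℝ)+1)) * ∑ i ∈ Finset.range (n+1), 4^n * (extendE N v (k+i))^2 := by
            rw [Finset.card_range]
            push_cast
            apply mul_le_mul_of_nonneg_left _ (by positivity)
            apply Finset.sum_le_sum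
            intro i hi
            have hCi : (n.choose i : ℝ) ≤ 2^n := by
              have h := Finset.single_le_sum (f := fun j => n.choose j)
                (fun j _ => Nat.zero_le _) hi
              rw [Nat.sum_range_choose] at h
              exact_mod_cast h
            have hC0 : (0:ℝ) ≤ (n.choose i : ℝ) := Nat.cast_nonneg _
            have hsq : ((-1:ℝ)^(n+i))^2 = 1 := by
              rw [← pow_mul, mul_comm, pow_mul]; norm_num
            have h4 : (4:ℝ)^n = (2^n)^2 := by
              rw [← pow_mul, mul_comm, pow_mul]; norm_num
            have he : ((-1:ℝ)^(n+i) * (n.choose i) * extendE N v (k+i))^2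
                = ((n.choose i:ℝ))^2 * (extendE N v (k+i))^2 := by
              rw [mul_pow, mul_pow, hsq, one_mul]
            rw [he, h4]
            have : ((n.choose i:ℝ))^2 ≤ (2^n)^2 := by nlinarith
            nlinarith [sq_nonneg (extendE N v (k+i))]
        _ = (((n:ℝ)+1) * 4^n) * ∑ i ∈ Finset.range (n+1), (extendE N v (k+i))^2 := by
            rw [Finset.mul_sum, Finset.mul_sum]
            apply Finset.sum_congr rfl
            intros; ring
    have hdouble : ∑ k ∈ Finset.Icc (1-(n:ℤ)) (N:ℤ), ∑ i ∈ Finset.range (n+1),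
        (extendE N v (k+i))^2 ≤ ((n:ℝ)+1) * ∑ k ∈ Finset.Icc (1:ℤ) (N:ℤ), (extendE N v k)^2 := by
      rw [Finset.sum_comm]
      calc ∑ i ∈ Finset.range (n+1), ∑ k ∈ Finset.Icc (1-(n:ℤ)) (N:ℤ), (extendE N v (k+i))^2
          ≤ ∑ _i ∈ Finset.range (n+1), ∑ k ∈ Finset.Icc (1:ℤ) (N:ℤ), (extendE N v k)^2 := by
            apply Finset.sum_le_sum
            intro i _
            have himg : ∑ k ∈ Finset.Icc (1-(n:ℤ)) (N:ℤ), (extendE N v (k+(i:ℤ)))^2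
                = ∑ m ∈ (Finset.Icc (1-(n:ℤ)) (N:ℤ)).image (· + (i:ℤ)), (extendE N v m)^2 := by
              rw [Finset.sum_image (by intro a _ b _ h; simp only at h; omega)]
            rw [himg]
            exact sum_sq_le_S N v _
        _ = ((n:ℝ)+1) * ∑ k ∈ Finset.Icc (1:ℤ) (N:ℤ), (extendE N v k)^2 := by
            rw [Finset.sum_const, Finset.card_range, nsmul_eq_mul]
            push_cast; ring
    calc ∑ k ∈ Finset.Icc (1-(n:ℤ)) (N:ℤ), (1/2:ℝ) * p k * (dd^[n] (extendE N v) k)^2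
        ≤ ((1/2) * P * (((n:ℝ)+1) * 4^n)) * ∑ k ∈ Finset.Icc (1-(n:ℤ)) (N:ℤ),
            ∑ i ∈ Finset.range (n+1), (extendE N v (k+i))^2 := by
          rw [Finset.mul_sum]
          apply Finset.sum_le_sum
          intro k hk
          have h1 : p k * (dd^[n] (extendE N v) k)^2 ≤ P * (dd^[n] (extendE N v) k)^2 :=
            mul_le_mul_of_nonneg_right (hPk k hk) (sq_nonneg _)
          have h2 : P * (dd^[n] (extendE N v) k)^2 ≤ P * ((((n:ℝ)+1) * 4^n)
              * ∑ i ∈ Finset.range (n+1), (extendE N v (k+i))^2) :=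
            mul_le_mul_of_nonneg_left (hDk k) hP0
          nlinarith
      _ ≤ ((1/2) * P * (((n:ℝ)+1) * 4^n)) * (((n:ℝ)+1)
            * ∑ k ∈ Finset.Icc (1:ℤ) (N:ℤ), (extendE N v k)^2) :=
          mul_le_mul_of_nonneg_left hdouble hhalfP
      _ = Aq * ∑ k ∈ Finset.Icc (1:ℤ) (N:ℤ), (extendE N v k)^2 := by
          rw [hAq]; ring
  -- lower bound for F
  have hFbound : ∀ k ∈ Finset.Icc (1:ℤ) (N:ℤ), ∃ C : ℝ, 0 ≤ C ∧
      ∀ u : ℝ, α * |u|^q ≤ Ffun f k u + C := by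
    intro k hk
    obtain ⟨C0, hC0⟩ := (isCompact_Icc (a := -M) (b := M)).exists_bound_of_continuousOn
      ((continuous_Ffun hf k).continuousOn)
    have hC00 : (0:ℝ) ≤ C0 := by
      have := hC0 0 (by rw [Set.mem_Icc]; constructor <;> linarith)
      exact le_trans (norm_nonneg _) this
    have hMq : (0:ℝ) ≤ M^q := Real.rpow_nonneg hM q
    refine ⟨α * M^q + C0, by positivity, ?_⟩
    intro u
    by_cases hu : M < |u|
    · have := hFge k hk u hu
      nlinarith [Real.rpow_nonneg (abs_nonneg u) q]
    · push_neg at hu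
      have h1 : α * |u|^q ≤ α * M^q :=
        mul_le_mul_of_nonneg_left (Real.rpow_le_rpow (abs_nonneg _) hu (by linarith)) hα.le
      have h2 : -C0 ≤ Ffun f k u := by
        have hmem : u ∈ Set.Icc (-M) M := by
          rw [Set.mem_Icc]; exact abs_le.1 hu
        have := hC0 u hmem
        rw [Real.norm_eq_abs] at this
        linarith [(abs_le.1 this).1]
      linarith
  choose! Cfun hCfun0 hCfun using hFbound
  obtain ⟨Ct, hCt⟩ : ∃ Ct : ℝ, Ct = ∑ k ∈ Finset.Icc (1:ℤ) (N:ℤ), Cfun k := ⟨_, rfl⟩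
  -- the F-part of J reduces to the inner sum
  have hsub : Finset.Icc (1:ℤ) (N:ℤ) ⊆ Finset.Icc (1-(n:ℤ)) (N:ℤ) := by
    intro k hk
    rw [Finset.mem_Icc] at *
    omega
  have hFsum_eq : ∀ v : Fin N → ℝ,
      ∑ k ∈ Finset.Icc (1-(n:ℤ)) (N:ℤ), Ffun f k (extendE N v k)
        = ∑ k ∈ Finset.Icc (1:ℤ) (N:ℤ), Ffun f k (extendE N v k) := by
    intro v
    apply (Finset.sum_subset hsub _).symm
    intro k _ hk'
    rw [extendE_eq_zero N v k hk', Ffun_zero]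
  -- global upper bound for J
  have hJle : ∀ v : Fin N → ℝ, Jfun n N p (Ffun f) v
      ≤ Aq * (∑ k ∈ Finset.Icc (1:ℤ) (N:ℤ), (extendE N v k)^2)
        - α * ((∑ k ∈ Finset.Icc (1:ℤ) (N:ℤ), (extendE N v k)^2) / (N:ℝ))^(q/2) + Ct := by
    intro v
    set S : ℝ := ∑ k ∈ Finset.Icc (1:ℤ) (N:ℤ), (extendE N v k)^2 with hS
    clear_value S
    have hS0 : (0:ℝ) ≤ S := by
      rw [hS]; exact Finset.sum_nonneg fun _ _ => sq_nonneg _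
    have hJeq : Jfun n N p (Ffun f) v
        = (∑ k ∈ Finset.Icc (1-(n:ℤ)) (N:ℤ), (1/2:ℝ) * p k * (dd^[n] (extendE N v) k)^2)
          - ∑ k ∈ Finset.Icc (1:ℤ) (N:ℤ), Ffun f k (extendE N v k) := by
      unfold Jfun
      rw [Finset.sum_sub_distrib, hFsum_eq v]
    have hpig : (S / (N:ℝ))^(q/2) ≤ ∑ k ∈ Finset.Icc (1:ℤ) (N:ℤ), |extendE N v k|^q := by
      have hcard : (Finset.Icc (1:ℤ) (N:ℤ)).card = N := by
        rw [Int.card_Icc]; omega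
      have hne : (Finset.Icc (1:ℤ) (N:ℤ)).Nonempty := ⟨1, by rw [Finset.mem_Icc]; omega⟩
      have hsum_const : ∑ _k ∈ Finset.Icc (1:ℤ) (N:ℤ), (S / (N:ℝ)) = S := by
        rw [Finset.sum_const, hcard, nsmul_eq_mul]
        field_simp
      have hSg : ∑ _k ∈ Finset.Icc (1:ℤ) (N:ℤ), (S / (N:ℝ))
          ≤ ∑ k ∈ Finset.Icc (1:ℤ) (N:ℤ), (extendE N v k)^2 := by
        rw [hsum_const, hS]
      obtain ⟨k0, hk0mem, hk0⟩ := Finset.exists_le_of_sum_le hne hSg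
      have h1 : (S/(N:ℝ))^(q/2) ≤ ((extendE N v k0)^2)^(q/2) :=
        Real.rpow_le_rpow (div_nonneg hS0 hNR.le) hk0 (by linarith)
      have h2 : ((extendE N v k0)^2)^(q/2) = |extendE N v k0|^q := by
        rw [← sq_abs, ← Real.rpow_natCast |extendE N v k0| 2,
          ← Real.rpow_mul (abs_nonneg _)]
        congr 1
        push_cast
        ring
      calc (S/(N:ℝ))^(q/2) ≤ |extendE N v k0|^q := h1.trans (le_of_eq h2)
        _ ≤ ∑ k ∈ Finset.Icc (1:ℤ) (N:ℤ), |extendE N v k|^q :=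
          Finset.single_le_sum (fun k _ => Real.rpow_nonneg (abs_nonneg _) q) hk0mem
    have hF1 : α * (S/(N:ℝ))^(q/2) - Ct ≤ ∑ k ∈ Finset.Icc (1:ℤ) (N:ℤ), Ffun f k (extendE N v k) := by
      have h1 : ∑ k ∈ Finset.Icc (1:ℤ) (N:ℤ), (α * |extendE N v k|^q - Cfun k)
          ≤ ∑ k ∈ Finset.Icc (1:ℤ) (N:ℤ), Ffun f k (extendE N v k) := by
        apply Finset.sum_le_sum
        intro k hk
        linarith [hCfun k hk (extendE N v k)]
      rw [Finset.sum_sub_distrib, ← Finset.mul_sum, ← hCt] at h1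
      have h2 : α * (S/(N:ℝ))^(q/2) ≤ α * ∑ k ∈ Finset.Icc (1:ℤ) (N:ℤ), |extendE N v k|^q :=
        mul_le_mul_of_nonneg_left hpig hα.le
      linarith
    rw [hJeq]
    have := hquad v
    rw [← hS] at this
    linarith
  -- the threshold
  obtain ⟨Dq, hDq⟩ : ∃ Dq : ℝ, Dq = α / (N:ℝ)^(q/2) := ⟨_, rfl⟩
  have hDq0 : 0 < Dq := by
    rw [hDq]; exact div_pos hα (Real.rpow_pos_of_pos hNR _)
  set ee : ℝ := q/2 - 1 with hee
  have hee0 : 0 < ee := by rw [hee]; linarith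
  obtain ⟨T, hT⟩ : ∃ T : ℝ, T = max 1 (max (((Aq+1)/Dq)^(ee⁻¹)) Ct) := ⟨_, rfl⟩
  have hT1 : (1:ℝ) ≤ T := by rw [hT]; exact le_max_left _ _
  have hT0 : (0:ℝ) ≤ T := by linarith
  have hBig : ∀ v : Fin N → ℝ,
      T ≤ ∑ k ∈ Finset.Icc (1:ℤ) (N:ℤ), (extendE N v k)^2 → Jfun n N p (Ffun f) v ≤ 0 := by
    intro v hTS
    set S : ℝ := ∑ k ∈ Finset.Icc (1:ℤ) (N:ℤ), (extendE N v k)^2 with hS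
    clear_value S
    have hS0 : (0:ℝ) < S := lt_of_lt_of_le (by linarith) hTS
    have hsplit : S^(q/2) = S * S^ee := by
      rw [show q/2 = 1 + ee by rw [hee]; ring, Real.rpow_add hS0, Real.rpow_one]
    have hSe : (Aq+1)/Dq ≤ S^ee := by
      have h1 : ((Aq+1)/Dq)^(ee⁻¹) ≤ S := by
        rw [hT] at hTS
        exact le_trans (le_trans (le_max_left _ _) (le_max_right 1 _)) hTS
      have hAD : (0:ℝ) ≤ (Aq+1)/Dq := div_nonneg (by linarith) hDq0.le
      calc (Aq+1)/Dq = (((Aq+1)/Dq)^(ee⁻¹))^ee :=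
            (Real.rpow_inv_rpow hAD (ne_of_gt hee0)).symm
        _ ≤ S^ee := Real.rpow_le_rpow (Real.rpow_nonneg hAD _) h1 hee0.le
    have hdiv : (S/(N:ℝ))^(q/2) = S^(q/2)/(N:ℝ)^(q/2) := Real.div_rpow hS0.le hNR.le (q/2)
    have hkey : α * ((S/(N:ℝ))^(q/2)) = Dq * S^(q/2) := by
      rw [hdiv, hDq]; ring
    have hge : (Aq+1) * S ≤ Dq * S^(q/2) := by
      rw [hsplit]
      have h1 : Aq + 1 ≤ Dq * S^ee := by
        have h2 := (div_le_iff₀ hDq0).1 hSe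
        linarith
      nlinarith
    have hCtS : Ct ≤ S := by
      rw [hT] at hTS
      exact le_trans (le_trans (le_max_right _ _) (le_max_right 1 _)) hTS
    have := hJle v
    rw [← hS, hkey] at this
    linarith
  -- existence of a global maximiser
  obtain ⟨w, hwK, hwmax⟩ := (isCompact_closedBall (0 : Fin N → ℝ) (Real.sqrt T)).exists_isMaxOn
    ⟨0, Metric.mem_closedBall_self (Real.sqrt_nonneg T)⟩
    ((continuous_J n N p f hf).continuousOn)
  have hglobal : ∀ v : Fin N → ℝ, Jfun n N p (Ffun f) v ≤ Jfun n N p (Ffun f) w := by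
    intro v
    by_cases hv : v ∈ Metric.closedBall (0 : Fin N → ℝ) (Real.sqrt T)
    · exact hwmax hv
    · have h1 : ¬ ‖v‖ ≤ Real.sqrt T := by
        rwa [Metric.mem_closedBall, dist_zero_right] at hv
      have h2 : ∃ j : Fin N, Real.sqrt T < ‖v j‖ := by
        by_contra h
        push_neg at h
        exact h1 ((pi_norm_le_iff_of_nonneg (Real.sqrt_nonneg T)).2 fun i => h i)
      obtain ⟨j, hj⟩ := h2
      have hTv : T ≤ ∑ k ∈ Finset.Icc (1:ℤ) (N:ℤ), (extendE N v k)^2 := by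
        rw [sum_extendE_sq N hNpos]
        have h3 : T = (Real.sqrt T)^2 := (Real.sq_sqrt hT0).symm
        have h4 : (Real.sqrt T)^2 ≤ (v j)^2 := by
          rw [Real.norm_eq_abs] at hj
          nlinarith [Real.sqrt_nonneg T, abs_nonneg (v j), sq_abs (v j)]
        calc T = (Real.sqrt T)^2 := h3
          _ ≤ (v j)^2 := h4
          _ ≤ ∑ j' : Fin N, (v j')^2 :=
            Finset.single_le_sum (f := fun i : Fin N => (v i)^2)
              (fun i _ => sq_nonneg _) (Finset.mem_univ j)
      calc Jfun n N p (Ffun f) v ≤ 0 := hBig v hTv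
        _ = Jfun n N p (Ffun f) 0 := hJ0.symm
        _ ≤ Jfun n N p (Ffun f) w := hwmax (Metric.mem_closedBall_self (Real.sqrt_nonneg T))
  -- a point with positive energy
  have h1mem : (1:ℤ) ∈ Finset.Icc (1:ℤ) (N:ℤ) := by rw [Finset.mem_Icc]; omega
  set ε : ℝ := (lam * pmin - c)/2 with hε
  have hε0 : 0 < ε := by rw [hε]; linarith
  obtain ⟨δ, hδ0, hδ⟩ := (Metric.tendsto_nhdsWithin_nhds).1 (hlim 1 h1mem) ε hε0
  set t : ℝ := δ/2 with htdef
  have ht0 : 0 < t := by rw [htdef]; linarith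
  set j0 : Fin N := ⟨0, hNpos⟩ with hj0
  set v1 : Fin N → ℝ := Pi.single j0 t with hv1
  have hx1 : ∀ k : ℤ, extendE N v1 k = if k = 1 then t else 0 := by
    intro k
    rw [hv1, extendE_single]
    have : ((j0:ℤ)) = 0 := by rw [hj0]; simp
    rw [this]
    norm_num
  have hS1 : ∑ k ∈ Finset.Icc (1:ℤ) (N:ℤ), (extendE N v1 k)^2 = t^2 := by
    have h1 : ∀ k ∈ Finset.Icc (1:ℤ) (N:ℤ), (extendE N v1 k)^2
        = if k = 1 then t^2 else 0 := by
      intro k _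
      rw [hx1]
      split_ifs <;> norm_num
    rw [Finset.sum_congr rfl h1, Finset.sum_ite_eq' _ (1:ℤ) (fun _ => t^2), if_pos h1mem]
  have hq1 : (lam * pmin / 2) * t^2
      ≤ ∑ k ∈ Finset.Icc (1-(n:ℤ)) (N:ℤ), (1/2:ℝ) * p k * (dd^[n] (extendE N v1) k)^2 := by
    have h2 := hpoin v1
    rw [hS1] at h2
    calc (lam*pmin/2)*t^2 = (pmin/2) * (lam * t^2) := by ring
      _ ≤ (pmin/2) * ∑ k ∈ Finset.Icc (1-(n:ℤ)) (N:ℤ), (dd^[n] (extendE N v1) k)^2 :=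
          mul_le_mul_of_nonneg_left h2 (by positivity)
      _ = ∑ k ∈ Finset.Icc (1-(n:ℤ)) (N:ℤ), (pmin/2) * (dd^[n] (extendE N v1) k)^2 := by
          rw [Finset.mul_sum]
      _ ≤ ∑ k ∈ Finset.Icc (1-(n:ℤ)) (N:ℤ), (1/2:ℝ)*p k*(dd^[n] (extendE N v1) k)^2 := by
          apply Finset.sum_le_sum
          intro k hk
          have := hp k hk
          nlinarith [sq_nonneg (dd^[n] (extendE N v1) k)]
  have hFv1 : ∑ k ∈ Finset.Icc (1-(n:ℤ)) (N:ℤ), Ffun f k (extendE N v1 k) = Ffun f 1 t := by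
    have h1 : ∀ k ∈ Finset.Icc (1-(n:ℤ)) (N:ℤ), Ffun f k (extendE N v1 k)
        = if k = 1 then Ffun f 1 t else 0 := by
      intro k _
      rw [hx1]
      split_ifs with h
      · rw [h]
      · exact Ffun_zero f k
    rw [Finset.sum_congr rfl h1, Finset.sum_ite_eq' _ (1:ℤ) (fun _ => Ffun f 1 t),
      if_pos (hsub h1mem)]
  have hFt : Ffun f 1 t ≤ (c + ε)/2 * t^2 := by
    have hpt : ∀ s ∈ Set.Icc (0:ℝ) t, f 1 s ≤ (c+ε) * s := by
      intro s hs
      rcases eq_or_lt_of_le hs.1 with h0 | h0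
      · rw [← h0, hf0]
        norm_num
      · have hsδ : dist s 0 < δ := by
          rw [Real.dist_eq, sub_zero, abs_of_pos h0]
          have := hs.2
          rw [htdef] at this
          linarith
        have hmem : s ∈ ({(0:ℝ)}ᶜ : Set ℝ) := Set.mem_compl_singleton_iff.2 (ne_of_gt h0)
        have hd := hδ hmem hsδ
        rw [Real.dist_eq] at hd
        have h2 : f 1 s / s < L 1 + ε := by
          have := abs_sub_lt_iff.1 hd
          linarith [this.1]
        have h3 : f 1 s / s ≤ c + ε := by linarith [hLc 1 h1mem]
        calc f 1 s = (f 1 s / s) * s := by field_simp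
          _ ≤ (c+ε) * s := mul_le_mul_of_nonneg_right h3 h0.le
    calc Ffun f 1 t = ∫ s in (0:ℝ)..t, f 1 s := rfl
      _ ≤ ∫ s in (0:ℝ)..t, (c+ε) * s := by
          apply intervalIntegral.integral_mono_on ht0.le
            ((hf 1).intervalIntegrable 0 t)
            ((continuous_const.mul continuous_id).intervalIntegrable 0 t) hpt
      _ = (c+ε) * (t^2/2) := by
          rw [intervalIntegral.integral_const_mul, integral_id]
          ring
      _ = (c+ε)/2 * t^2 := by ring
  have hJv1 : 0 < Jfun n N p (Ffun f) v1 := by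
    have hJeq : Jfun n N p (Ffun f) v1
        = (∑ k ∈ Finset.Icc (1-(n:ℤ)) (N:ℤ), (1/2:ℝ) * p k * (dd^[n] (extendE N v1) k)^2)
          - ∑ k ∈ Finset.Icc (1-(n:ℤ)) (N:ℤ), Ffun f k (extendE N v1 k) := by
      unfold Jfun
      rw [Finset.sum_sub_distrib]
    rw [hJeq, hFv1]
    have hce : c + ε = lam * pmin - ε := by rw [hε]; ring
    have ht2 : 0 < t^2 := by positivity
    nlinarith [hq1, hFt]
  -- conclusion
  refine ⟨0, w, ?_, solves_zero n N p f hf0, crit_solves n N hN p f hf w hglobal⟩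
  intro h0w
  have h2 : 0 < Jfun n N p (Ffun f) w := lt_of_lt_of_le hJv1 (hglobal v1)
  rw [← h0w, hJ0] at h2
  exact lt_irrefl 0 h2
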